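/- Let G be a locally compact, totally disconnected, Hausdorff topological group, let K be a compact subgroup of G, and let W be an open set with K ⊆ W. Then there exists a compact open subgroup U of G with K ⊆ U ⊆ W. -/

import Mathlib

open Set Topology Filter Pointwise

/-- Van Dantzig's theorem: a locally compact, totally disconnected Hausdorff group has
a compact open subgroup inside every open neighborhood of the identity. -/
theorem vanDantzig_aux {G : Type*} [Group G] [TopologicalSpace G] [IsTopologicalGroup G]
    [LocallyCompactSpace G] [T2Space G] [TotallyDisconnectedSpace G]
    {O : Set G} (hO : IsOpen O) (h1O : (1 : G) ∈ O) :
    ∃ V : Subgroup G, IsCompact (V : Set G) ∧ IsOpen (V : Set G) ∧ (V : Set G) ⊆ O := by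
  obtain ⟨s, scomp, h1s, sO⟩ := exists_compact_subset hO h1O
  obtain ⟨C, hCclopen, h1C, hCs⟩ :=
    (loc_compact_Haus_tot_disc_of_zero_dim.mem_nhds_iff (a := (1 : G))).mp
      (isOpen_interior.mem_nhds h1s)
  have hCcomp : IsCompact C :=
    scomp.of_isClosed_subset hCclopen.isClosed (hCs.trans interior_subset)
  have hCopen : IsOpen C := hCclopen.isOpen
  have hCO : C ⊆ O := hCs.trans (interior_subset.trans sO)
  -- find a symmetric open T ∋ 1 with T * C ⊆ C
  obtain ⟨T, hT, hTC⟩ := compact_open_separated_mul_left hCcomp hCopen (Subset.refl C)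
  obtain ⟨T', hT'T, hT'open, h1T'⟩ := mem_nhds_iff.mp hT
  -- the "stabilizer" subgroup
  let H : Subgroup G :=
    { carrier := {g : G | (∀ c ∈ C, g * c ∈ C) ∧ (∀ c ∈ C, g⁻¹ * c ∈ C)}
      one_mem' := by simp
      mul_mem' := by
        rintro a b ⟨ha₁, ha₂⟩ ⟨hb₁, hb₂⟩
        refine ⟨fun c hc => ?_, fun c hc => ?_⟩
        · rw [mul_assoc]; exact ha₁ _ (hb₁ _ hc)
        · rw [mul_inv_rev, mul_assoc]; exact hb₂ _ (ha₂ _ hc)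
      inv_mem' := by
        rintro a ⟨ha₁, ha₂⟩
        exact ⟨ha₂, by simpa using ha₁⟩ }
  have hTmem : ∀ t ∈ T, ∀ c ∈ C, t * c ∈ C := fun t ht c hc =>
    hTC (Set.mul_mem_mul ht hc)
  have hsub : T' ∩ T'⁻¹ ⊆ (H : Set G) := by
    rintro t ⟨ht₁, ht₂⟩
    exact ⟨hTmem t (hT'T ht₁), hTmem t⁻¹ (hT'T ht₂)⟩
  have hHopen : IsOpen (H : Set G) :=
    Subgroup.isOpen_of_mem_nhds H <|
      Filter.mem_of_superset
        ((hT'open.inter hT'open.inv).mem_nhds ⟨h1T', by simpa using h1T'⟩) hsub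
  have hHC : (H : Set G) ⊆ C := fun g hg => by
    simpa using hg.1 1 h1C
  exact ⟨H, hCcomp.of_isClosed_subset (H.isClosed_of_isOpen hHopen) hHC, hHopen,
    hHC.trans hCO⟩

/-- Van Dantzig type theorem: in a locally compact, totally disconnected, Hausdorff
topological group, every compact subgroup `K` contained in an open set `W` is contained
in a compact open subgroup `U` with `U ⊆ W`. -/
theorem stmt_0 {G : Type*} [Group G] [TopologicalSpace G] [IsTopologicalGroup G]
    [LocallyCompactSpace G] [T2Space G] [TotallyDisconnectedSpace G]
    (K : Subgroup G) (hK : IsCompact (K : Set G))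
    (W : Set G) (hW : IsOpen W) (hKW : (K : Set G) ⊆ W) :
    ∃ U : Subgroup G, IsCompact (U : Set G) ∧ IsOpen (U : Set G) ∧
      (K : Set G) ⊆ (U : Set G) ∧ (U : Set G) ⊆ W := by
  -- shrink: K * Vs ⊆ W
  obtain ⟨Vs, hVs, hKVs⟩ := compact_open_separated_mul_right hK hW hKW
  obtain ⟨O, hOVs, hOopen, h1O⟩ := mem_nhds_iff.mp hVs
  -- compact open subgroup V ⊆ O
  obtain ⟨V, hVcomp, hVopen, hVO⟩ := vanDantzig_aux hOopen h1O
  -- intersection of conjugates of V over K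
  let N : Subgroup G :=
    { carrier := {g : G | ∀ k ∈ K, k⁻¹ * g * k ∈ V}
      one_mem' := fun k _ => by simpa using V.one_mem
      mul_mem' := by
        intro a b ha hb k hk
        have : k⁻¹ * (a * b) * k = (k⁻¹ * a * k) * (k⁻¹ * b * k) := by group
        rw [this]; exact V.mul_mem (ha k hk) (hb k hk)
      inv_mem' := by
        intro a ha k hk
        have : k⁻¹ * a⁻¹ * k = (k⁻¹ * a * k)⁻¹ := by group
        rw [this]; exact V.inv_mem (ha k hk) }
  have hNV : (N : Set G) ⊆ (V : Set G) := fun g hg => by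
    simpa using hg 1 K.one_mem
  -- N is closed
  have hVclosed : IsClosed (V : Set G) := hVcomp.isClosed
  have hNclosed : IsClosed (N : Set G) := by
    have : (N : Set G) = ⋂ k ∈ (K : Set G), (fun g => k⁻¹ * g * k) ⁻¹' (V : Set G) := by
      ext g
      simp only [SetLike.mem_coe, Set.mem_iInter, Set.mem_preimage]
      rfl
    rw [this]
    exact isClosed_biInter fun k _ => hVclosed.preimage (by fun_prop)
  have hNcomp : IsCompact (N : Set G) := hVcomp.of_isClosed_subset hNclosed hNV
  -- N is open: uniform conjugation neighborhood via compactness of K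
  have key : ∀ k ∈ (K : Set G), ∃ A O' : Set G, IsOpen A ∧ IsOpen O' ∧ k ∈ A ∧
      (1 : G) ∈ O' ∧ ∀ a ∈ A, ∀ o ∈ O', a⁻¹ * o * a ∈ V := by
    intro k _
    have hc : Continuous fun p : G × G => p.1⁻¹ * p.2 * p.1 := by fun_prop
    have hmem : (k, (1 : G)) ∈ (fun p : G × G => p.1⁻¹ * p.2 * p.1) ⁻¹' (V : Set G) := by
      simpa using V.one_mem
    obtain ⟨A, O', hA, hO', hkA, h1O', hsub⟩ :=
      isOpen_prod_iff.mp (hVopen.preimage hc) k 1 hmem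
    exact ⟨A, O', hA, hO', hkA, h1O', fun a ha o ho => hsub (Set.mk_mem_prod ha ho)⟩
  choose A O' hA hO' hkA h1O' hconj using key
  obtain ⟨t, ht⟩ := hK.elim_nhds_subcover'
    (fun k (hk : (k : G) ∈ (K : Set G)) => A k hk) (fun k hk => (hA k hk).mem_nhds (hkA k hk))
  set Ofin : Set G := ⋂ k ∈ t, O' k.1 k.2 with hOfin_def
  have hOfinOpen : IsOpen Ofin := isOpen_biInter_finset fun k _ => hO' k.1 k.2
  have h1Ofin : (1 : G) ∈ Ofin := Set.mem_iInter₂.mpr fun k _ => h1O' k.1 k.2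
  have hNnhds : (N : Set G) ∈ 𝓝 (1 : G) := by
    refine Filter.mem_of_superset (hOfinOpen.mem_nhds h1Ofin) ?_
    intro g hg k hk
    obtain ⟨k', hk't, hkA'⟩ := Set.mem_iUnion₂.mp (ht hk)
    exact hconj k'.1 k'.2 k hkA' g (Set.mem_iInter₂.mp hg k' hk't)
  have hNopen : IsOpen (N : Set G) := Subgroup.isOpen_of_mem_nhds N hNnhds
  -- K normalizes N
  have hnorm : ∀ k ∈ K, ∀ n ∈ N, k * n * k⁻¹ ∈ N := by
    intro k hk n hn k' hk'
    have : k'⁻¹ * (k * n * k⁻¹) * k' = (k⁻¹ * k')⁻¹ * n * (k⁻¹ * k') := by group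
    rw [this]
    exact hn _ (K.mul_mem (K.inv_mem hk) hk')
  -- the subgroup with carrier K * N
  let U : Subgroup G :=
    { carrier := ((K : Set G) * (N : Set G) : Set G)
      one_mem' := ⟨1, K.one_mem, 1, N.one_mem, mul_one 1⟩
      mul_mem' := by
        rintro a b ⟨k₁, hk₁, n₁, hn₁, rfl⟩ ⟨k₂, hk₂, n₂, hn₂, rfl⟩
        refine ⟨k₁ * k₂, K.mul_mem hk₁ hk₂, (k₂⁻¹ * n₁ * k₂) * n₂,
          N.mul_mem (by simpa using hnorm k₂⁻¹ (K.inv_mem hk₂) n₁ hn₁) hn₂, by group⟩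
      inv_mem' := by
        rintro a ⟨k, hk, n, hn, rfl⟩
        exact ⟨k⁻¹, K.inv_mem hk, k * n⁻¹ * k⁻¹, hnorm k hk n⁻¹ (N.inv_mem hn), by group⟩ }
  refine ⟨U, ?_, ?_, ?_, ?_⟩
  · show IsCompact ((K : Set G) * (N : Set G)); exact hK.mul hNcomp
  · show IsOpen ((K : Set G) * (N : Set G)); exact hNopen.mul_left
  · intro k hk
    exact ⟨k, hk, 1, N.one_mem, mul_one k⟩
  · intro g hg
    obtain ⟨k, hk, n, hn, rfl⟩ := hg
    exact hKVs (Set.mul_mem_mul hk (hOVs (hVO (hNV hn))))
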